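/- Let f, g ∈ ℚ[X] with g ≠ 0, and suppose that for every prime power q one has g(q) ≠ 0 and f(q)/g(q) ∈ ℤ. Then g divides f in ℚ[X]; in particular, there is a polynomial h ∈ ℚ[X] such that f(q)/g(q) = h(q) for every prime power q. -/

import Mathlib

/-- eval of a mapped polynomial at a mapped point. -/
private lemma eval_map_cast {R S : Type*} [CommSemiring R] [CommSemiring S] (φ : R →+* S)
    (p : Polynomial R) (x : R) : (p.map φ).eval (φ x) = φ (p.eval x) := by
  rw [Polynomial.eval_map, Polynomial.eval₂_at_apply]

/-- A rational function in `q` that takes integer values at all prime powers is a polynomial: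
if `g(q) ≠ 0` and `f(q)/g(q) ∈ ℤ` for all prime powers `q`, then `g ∣ f` in `ℚ[X]` and the
quotient polynomial `h` satisfies `f(q)/g(q) = h(q)` at all prime powers. -/
theorem stmt16 (f g : Polynomial ℚ) (hg : g ≠ 0)
    (hint : ∀ q : ℕ, (∃ p k : ℕ, p.Prime ∧ 1 ≤ k ∧ q = p ^ k) →
      g.eval (q : ℚ) ≠ 0 ∧ ∃ z : ℤ, f.eval (q : ℚ) / g.eval (q : ℚ) = (z : ℚ)) :
    g ∣ f ∧ ∃ h : Polynomial ℚ, ∀ q : ℕ, (∃ p k : ℕ, p.Prime ∧ 1 ≤ k ∧ q = p ^ k) →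
      f.eval (q : ℚ) / g.eval (q : ℚ) = h.eval (q : ℚ) := by
  classical
  -- monic normalization of g
  set g' : Polynomial ℚ := g * Polynomial.C g.leadingCoeff⁻¹ with hg'def
  have hmonic : g'.Monic := Polynomial.monic_mul_leadingCoeff_inv hg
  set r : Polynomial ℚ := f %ₘ g' with hrdef
  set H : Polynomial ℚ := Polynomial.C g.leadingCoeff⁻¹ * (f /ₘ g') with hHdef
  have hfe : r + g * H = f := by
    have h0 := Polynomial.modByMonic_add_div f g'
    calc r + g * H = f %ₘ g' + g' * (f /ₘ g') := by rw [hrdef, hHdef, hg'def]; ring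
      _ = f := h0
  have hdegr : r.degree < g.degree := by
    have h1 : r.degree < g'.degree := Polynomial.degree_modByMonic_lt f hmonic
    rwa [hg'def, Polynomial.degree_mul_leadingCoeff_inv g hg] at h1
  -- common denominator for H
  obtain ⟨b, hb⟩ := IsLocalization.integerNormalization_map_to_map (nonZeroDivisors ℤ) H
  set N : Polynomial ℤ := IsLocalization.integerNormalization (nonZeroDivisors ℤ) H with hNdef
  have hbne : (b : ℤ) ≠ 0 := nonZeroDivisors.coe_ne_zero b
  have hbQ : ((b : ℤ) : ℚ) ≠ 0 := Int.cast_ne_zero.mpr hbne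
  -- for every prime power q, b * (r(q)/g(q)) is an integer
  have key : ∀ q : ℕ, (∃ p k : ℕ, p.Prime ∧ 1 ≤ k ∧ q = p ^ k) →
      ∃ m : ℤ, ((b:ℤ):ℚ) * (r.eval (q:ℚ) / g.eval (q:ℚ)) = (m : ℚ) := by
    intro q hq
    obtain ⟨hgne, z, hz⟩ := hint q hq
    refine ⟨(b:ℤ) * z - N.eval (q:ℤ), ?_⟩
    have hN : ((N.eval (q:ℤ) : ℤ) : ℚ) = ((b:ℤ):ℚ) * H.eval (q:ℚ) := by
      have := eval_map_cast (algebraMap ℤ ℚ) N (q:ℤ)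
      rw [hb] at this
      simp only [Polynomial.eval_smul, zsmul_eq_mul, smul_eq_mul, Polynomial.eval_mul,
        Polynomial.eval_intCast, algebraMap_int_eq, eq_intCast, Int.cast_natCast] at this
      exact this.symm
    have hrg : r.eval (q:ℚ) / g.eval (q:ℚ) = f.eval (q:ℚ) / g.eval (q:ℚ) - H.eval (q:ℚ) := by
      have : r.eval (q:ℚ) = f.eval (q:ℚ) - g.eval (q:ℚ) * H.eval (q:ℚ) := by
        rw [← hfe]; simp
      rw [this]; field_simp
    rw [hrg, hz]
    push_cast [hN]
    ring
  -- r = 0 by letting q → ∞ along primes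
  have hr0 : r = 0 := by
    by_cases hrz : r = 0
    · exact hrz
    -- pass to ℝ
    set R : Polynomial ℝ := r.map (algebraMap ℚ ℝ) with hRdef
    set G : Polynomial ℝ := g.map (algebraMap ℚ ℝ) with hGdef
    have hdegR : R.degree < G.degree := by
      rwa [hRdef, hGdef, Polynomial.degree_map, Polynomial.degree_map]
    have htend := Polynomial.div_tendsto_zero_of_degree_lt R G hdegR
    have habs : Filter.Tendsto (fun x : ℝ => |R.eval x / G.eval x|)
        Filter.atTop (nhds 0) := by
      have := htend.abs; simpa using this
    have hev : ∀ᶠ x : ℝ in Filter.atTop,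
        |R.eval x / G.eval x| < 1 / |((b:ℤ):ℝ)| :=
      habs.eventually_lt_const (by positivity)
    obtain ⟨M, hM⟩ := Filter.eventually_atTop.mp hev
    -- infinitely many roots of r among primes p with (p:ℝ) ≥ M
    have hroots : {x : ℚ | r.IsRoot x}.Infinite := by
      have hinf : ({p | Nat.Prime p} \ {p | p < ⌈M⌉₊}).Infinite :=
        Nat.infinite_setOf_prime.diff (Set.finite_lt_nat _)
      have himg : ((fun p : ℕ => (p : ℚ)) '' ({p | Nat.Prime p} \ {p | p < ⌈M⌉₊})).Infinite :=
        hinf.image (Set.injOn_of_injective Nat.cast_injective)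
      refine himg.mono ?_
      rintro x ⟨p, ⟨hp, hpM⟩, rfl⟩
      simp only [Set.mem_setOf_eq, not_lt] at hpM
      have hpp : ∃ p' k : ℕ, p'.Prime ∧ 1 ≤ k ∧ p = p' ^ k := ⟨p, 1, hp, le_refl 1, (pow_one p).symm⟩
      obtain ⟨hgne, _⟩ := hint p hpp
      obtain ⟨m, hm⟩ := key p hpp
      -- bound |m| < 1 in ℝ
      have hxM : M ≤ (p : ℝ) := le_trans (Nat.ceil_le.mp (le_refl _) |>.trans (Nat.cast_le.mpr hpM)) (le_refl _)
      have hcast : ((r.eval (p:ℚ) : ℚ) : ℝ) / ((g.eval (p:ℚ) : ℚ) : ℝ)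
          = R.eval (p:ℝ) / G.eval (p:ℝ) := by
        have h1 := eval_map_cast (algebraMap ℚ ℝ) r ((p:ℕ):ℚ)
        have h2 := eval_map_cast (algebraMap ℚ ℝ) g ((p:ℕ):ℚ)
        simp only [eq_ratCast] at h1 h2
        push_cast at h1 h2
        rw [hRdef, hGdef, h1, h2]
      have hmlt : |(m : ℝ)| < 1 := by
        have : (m : ℝ) = ((b:ℤ):ℝ) * (R.eval (p:ℝ) / G.eval (p:ℝ)) := by
          have := congrArg (fun t : ℚ => (t : ℝ)) hm
          push_cast at this
          rw [hcast] at this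
          exact this.symm
        rw [this, abs_mul]
        calc |((b:ℤ):ℝ)| * |R.eval (p:ℝ) / G.eval (p:ℝ)|
            < |((b:ℤ):ℝ)| * (1 / |((b:ℤ):ℝ)|) := by
              apply mul_lt_mul_of_pos_left (hM _ hxM)
              positivity
          _ = 1 := by field_simp
      have hm0 : m = 0 := by
        have h' : |m| < 1 := by exact_mod_cast hmlt
        have := abs_lt.mp h'
        omega
      rw [hm0] at hm
      simp only [Int.cast_zero] at hm
      have := mul_eq_zero.mp hm
      rcases this with h | h
      · exact absurd h hbQ
      · have := div_eq_zero_iff.mp h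
        rcases this with h' | h'
        · exact h'
        · exact absurd h' hgne
    exact Polynomial.eq_zero_of_infinite_isRoot r hroots
  have hdvd : g ∣ f := ⟨H, by rw [← hfe, hr0]; ring⟩
  refine ⟨hdvd, H, ?_⟩
  intro q hq
  obtain ⟨hgne, _⟩ := hint q hq
  have : f.eval (q:ℚ) = g.eval (q:ℚ) * H.eval (q:ℚ) := by
    rw [← hfe, hr0]; simp
  rw [this]
  exact mul_div_cancel_left₀ _ hgne
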